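/- If M₃(a) < ∞, then Â(ξ + 2πn) ≥ C(a)|ξ|² for all ξ ∈ [−π,π)^d and n ∈ ℤ^d, where C(a) = min{ (1/4)ℳ(a), 𝒞_{r(a)}(a) π^{−2} d^{−1}, 𝒞_π(a) π^{−2} d^{−1} } > 0 with r(a) = 3ℳ(a)/(2M₃(a)). -/

import Mathlib

open MeasureTheory
open scoped RealInnerProductSpace

noncomputable section

def intVec (d : ℕ) (n : Fin d → ℤ) : EuclideanSpace ℝ (Fin d) := WithLp.toLp 2 (fun i => (n i : ℝ))

def dualCell (d : ℕ) : Set (EuclideanSpace ℝ (Fin d)) :=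
  {ξ | ∀ i, ξ i ∈ Set.Ico (-Real.pi) Real.pi}

lemma aux_cos_cubic (t : ℝ) : t ^ 2 / 2 - |t| ^ 3 / 6 ≤ 1 - Real.cos t := by
  wlog ht : 0 ≤ t generalizing t
  · have := this (-t) (by linarith [le_of_not_ge ht])
    simpa [abs_neg, Real.cos_neg, neg_pow] using this
  rw [abs_of_nonneg ht]
  have hg1 : ∀ s : ℝ, 0 ≤ s → 0 ≤ Real.sin s - s + s ^ 2 / 2 := by
    intro s hs
    set g1 : ℝ → ℝ := fun u => Real.sin u - u + u ^ 2 / 2 with hg1def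
    have hder : ∀ u : ℝ, HasDerivAt g1 (Real.cos u - 1 + u) u := by
      intro u
      have h1 : HasDerivAt (fun x : ℝ => x ^ 2 / 2) (2 * u ^ 1 / 2) u :=
        (hasDerivAt_pow 2 u).div_const 2
      have := ((Real.hasDerivAt_sin u).sub (hasDerivAt_id u)).add h1
      exact this.congr_deriv (by ring)
    have hmono : MonotoneOn g1 (Set.Ici (0:ℝ)) := by
      apply monotoneOn_of_deriv_nonneg (convex_Ici 0)
      · exact (Continuous.continuousOn (by continuity))
      · exact fun x _ => (hder x).differentiableAt.differentiableWithinAt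
      · intro x hx
        rw [interior_Ici] at hx
        rw [(hder x).deriv]
        have h2 : (1:ℝ) - x ≤ Real.cos x := by
          rcases le_or_gt x 2 with h | h
          · nlinarith [Real.one_sub_sq_div_two_le_cos (x := x), (Set.mem_Ioi.1 hx).le]
          · nlinarith [Real.neg_one_le_cos x]
        linarith
    have := hmono (Set.self_mem_Ici) (Set.mem_Ici.2 hs) hs
    simpa [g1] using this
  set g2 : ℝ → ℝ := fun u => 1 - Real.cos u - u ^ 2 / 2 + u ^ 3 / 6 with hg2def
  have hder2 : ∀ u : ℝ, HasDerivAt g2 (Real.sin u - u + u ^ 2 / 2) u := by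
    intro u
    have h1 : HasDerivAt (fun x : ℝ => x ^ 2 / 2) (2 * u ^ 1 / 2) u :=
      (hasDerivAt_pow 2 u).div_const 2
    have h2 : HasDerivAt (fun x : ℝ => x ^ 3 / 6) (3 * u ^ 2 / 6) u :=
      (hasDerivAt_pow 3 u).div_const 6
    have := (((hasDerivAt_const u (1:ℝ)).sub (Real.hasDerivAt_cos u)).sub h1).add h2
    exact this.congr_deriv (by ring)
  have hmono2 : MonotoneOn g2 (Set.Ici (0:ℝ)) := by
    apply monotoneOn_of_deriv_nonneg (convex_Ici 0)
    · exact (Continuous.continuousOn (by continuity))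
    · exact fun x _ => (hder2 x).differentiableAt.differentiableWithinAt
    · intro x hx
      rw [interior_Ici] at hx
      rw [(hder2 x).deriv]
      exact hg1 x hx.le
  have := hmono2 (Set.self_mem_Ici) (Set.mem_Ici.2 ht) ht
  simp only [g2, Real.cos_zero] at this
  nlinarith [this]

/-- A (possibly affine) hyperplane `{z | ⟪z, y⟫ = c}` with `y ≠ 0` is volume-null. -/
lemma aux_hyperplane_null {d : ℕ} (y : EuclideanSpace ℝ (Fin d)) (hy : y ≠ 0) (c : ℝ) :
    (volume : Measure (EuclideanSpace ℝ (Fin d))) {z | ⟪z, y⟫ = c} = 0 := by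
  set K : Submodule ℝ (EuclideanSpace ℝ (Fin d)) :=
    LinearMap.ker ((innerSL ℝ y : EuclideanSpace ℝ (Fin d) →L[ℝ] ℝ) : EuclideanSpace ℝ (Fin d) →ₗ[ℝ] ℝ) with hK
  have hKne : K ≠ ⊤ := by
    intro h
    have hyK : y ∈ K := h ▸ Submodule.mem_top
    have : ⟪y, y⟫ = 0 := hyK
    exact hy (inner_self_eq_zero.1 this)
  have h0 : (volume : Measure (EuclideanSpace ℝ (Fin d))) (K : Set _) = 0 :=
    Measure.addHaar_submodule volume K hKne
  have hyy : ⟪y, y⟫ ≠ 0 := inner_self_ne_zero.2 hy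
  set v : EuclideanSpace ℝ (Fin d) := (c / ⟪y, y⟫) • y with hv
  have hpre : (fun z => v + z) ⁻¹' {z | ⟪z, y⟫ = c} = (K : Set _) := by
    ext z
    simp only [Set.mem_preimage, Set.mem_setOf_eq, SetLike.mem_coe, hK,
      LinearMap.mem_ker, ContinuousLinearMap.coe_coe, innerSL_apply_apply]
    rw [inner_add_left, hv, real_inner_smul_left, div_mul_cancel₀ _ hyy,
      real_inner_comm y z]
    constructor <;> intro h <;> linarith
  calc (volume : Measure (EuclideanSpace ℝ (Fin d))) {z | ⟪z, y⟫ = c}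
      = volume ((fun z => v + z) ⁻¹' {z | ⟪z, y⟫ = c}) :=
        (measure_preimage_add volume v _).symm
    _ = 0 := by rw [hpre]; exact h0


lemma aux_abs_coord_le_norm {d : ℕ} (x : EuclideanSpace ℝ (Fin d)) (i : Fin d) :
    |x i| ≤ ‖x‖ := by
  rw [EuclideanSpace.norm_eq, ← Real.sqrt_sq_eq_abs]
  apply Real.sqrt_le_sqrt
  have : x i ^ 2 = ‖x i‖ ^ 2 := by rw [Real.norm_eq_abs, sq_abs]
  rw [this]
  exact Finset.single_le_sum (fun j _ => sq_nonneg ‖x j‖) (Finset.mem_univ i)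

lemma aux_norm_sq_eq {d : ℕ} (x : EuclideanSpace ℝ (Fin d)) :
    ‖x‖ ^ 2 = ∑ i, x i ^ 2 := by
  rw [EuclideanSpace.norm_eq, Real.sq_sqrt (Finset.sum_nonneg fun j _ => sq_nonneg _)]
  congr 1
  ext j
  rw [Real.norm_eq_abs, sq_abs]

/-- If `M₃(a) < ∞`, then `Â(ξ + 2πn) ≥ C(a)|ξ|²` for all `ξ ∈ [-π,π)ᵈ` and
`n ∈ ℤᵈ`, where `C(a) = min{ ℳ(a)/4, 𝒞_{r(a)}(a) π⁻²d⁻¹, 𝒞_π(a) π⁻²d⁻¹ } > 0` with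
`r(a) = 3ℳ(a)/(2M₃(a))`. -/
theorem stmt_12 (d : ℕ) (hd : 0 < d)
    (a : EuclideanSpace ℝ (Fin d) → ℝ)
    (ha : Integrable a) (ha0 : ∀ x, 0 ≤ a x) (haev : ∀ x, a (-x) = a x)
    (hpos : 0 < (volume : Measure (EuclideanSpace ℝ (Fin d))) {z | a z ≠ 0})
    (hM3 : Integrable fun z : EuclideanSpace ℝ (Fin d) => ‖z‖ ^ 3 * a z)
    -- `ℳ(a) = min_{|θ|=1} ∫ a(z) ⟨z,θ⟩² dz`
    (M : ℝ)
    (hM : IsLeast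
      ((fun θ : EuclideanSpace ℝ (Fin d) => ∫ z, a z * ⟪z, θ⟫ ^ 2) '' {θ | ‖θ‖ = 1}) M)
    -- `𝒞_r(a) = min_{|y| ≥ r} Â(y)`
    (Cr : ℝ → ℝ)
    (hCr : ∀ r : ℝ, 0 < r → IsLeast
      ((fun y : EuclideanSpace ℝ (Fin d) => ∫ z, (1 - Real.cos ⟪z, y⟫) * a z) ''
        {y | r ≤ ‖y‖}) (Cr r)) :
    (0 < min (min (M / 4) (Cr (3 * M / (2 * ∫ z, ‖z‖ ^ 3 * a z)) / (Real.pi ^ 2 * d)))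
        (Cr Real.pi / (Real.pi ^ 2 * d))) ∧
    ∀ ξ ∈ dualCell d, ∀ n : Fin d → ℤ,
      min (min (M / 4) (Cr (3 * M / (2 * ∫ z, ‖z‖ ^ 3 * a z)) / (Real.pi ^ 2 * d)))
          (Cr Real.pi / (Real.pi ^ 2 * d)) * ‖ξ‖ ^ 2
        ≤ ∫ z, (1 - Real.cos ⟪z, ξ + (2 * Real.pi) • intVec d n⟫) * a z := by
  have hπ := Real.pi_pos
  set M3 : ℝ := ∫ z, ‖z‖ ^ 3 * a z with hM3def
  set C : ℝ := min (min (M / 4) (Cr (3 * M / (2 * M3)) / (Real.pi ^ 2 * d)))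
      (Cr Real.pi / (Real.pi ^ 2 * d)) with hCdef
  -- generic positivity of integrals of nonnegative functions vanishing only on a null set
  have hgen : ∀ g : EuclideanSpace ℝ (Fin d) → ℝ, (∀ z, 0 ≤ g z) → Integrable g →
      ∀ S : Set (EuclideanSpace ℝ (Fin d)), volume S = 0 →
      (∀ z, a z ≠ 0 → g z = 0 → z ∈ S) → 0 < ∫ z, g z := by
    intro g hg0 hgint S hS h
    rcases (integral_nonneg (f := g) hg0).eq_or_lt with h0 | h0
    · exfalso
      have hae : g =ᵐ[volume] 0 :=
        (integral_eq_zero_iff_of_nonneg hg0 hgint).1 h0.symm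
      have h1 : (volume : Measure (EuclideanSpace ℝ (Fin d))) {z | g z ≠ 0} = 0 := by
        rw [Filter.EventuallyEq, ae_iff] at hae
        simpa using hae
      have hsub : {z | a z ≠ 0} ⊆ {z | g z ≠ 0} ∪ S := by
        intro z hz
        by_cases hgz : g z = 0
        · exact Or.inr (h z hz hgz)
        · exact Or.inl hgz
      exact absurd (measure_mono_null hsub (measure_union_null h1 hS)) hpos.ne'
    · exact h0
  -- integrability of the Â integrand
  have hA_int : ∀ y : EuclideanSpace ℝ (Fin d),
      Integrable (fun z => (1 - Real.cos ⟪z, y⟫) * a z) := by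
    intro y
    have hc : Continuous fun z : EuclideanSpace ℝ (Fin d) => 1 - Real.cos ⟪z, y⟫ :=
      continuous_const.sub (Real.continuous_cos.comp (continuous_id.inner continuous_const))
    refine (ha.const_mul 2).mono (hc.aestronglyMeasurable.mul ha.1)
      (Filter.Eventually.of_forall fun z => ?_)
    have h1 := Real.neg_one_le_cos ⟪z, y⟫
    have h2 := Real.cos_le_one ⟪z, y⟫
    rw [norm_mul, norm_mul]
    apply mul_le_mul_of_nonneg_right _ (norm_nonneg _)
    rw [Real.norm_eq_abs, Real.norm_eq_abs]
    rw [abs_of_nonneg (by linarith : (0:ℝ) ≤ 1 - Real.cos ⟪z, y⟫)]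
    rw [abs_of_nonneg (by norm_num : (0:ℝ) ≤ 2)]
    linarith
  have hInn : ∀ y : EuclideanSpace ℝ (Fin d),
      0 ≤ ∫ z, (1 - Real.cos ⟪z, y⟫) * a z := fun y =>
    integral_nonneg fun z => mul_nonneg (by linarith [Real.cos_le_one ⟪z, y⟫]) (ha0 z)
  -- integrability of z ↦ a z ⟪z, ξ⟫²
  have hsq_int : ∀ ξ : EuclideanSpace ℝ (Fin d),
      Integrable (fun z => a z * ⟪z, ξ⟫ ^ 2) := by
    intro ξ
    have hc : Continuous fun z : EuclideanSpace ℝ (Fin d) => ⟪z, ξ⟫ ^ 2 :=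
      (continuous_id.inner continuous_const).pow 2
    have hgint : Integrable (fun z => ‖ξ‖ ^ 2 * (a z + ‖z‖ ^ 3 * a z)) volume :=
      (ha.add hM3).const_mul _
    refine hgint.mono (ha.1.mul hc.aestronglyMeasurable)
      (Filter.Eventually.of_forall fun z => ?_)
    have h1 : |⟪z, ξ⟫| ≤ ‖z‖ * ‖ξ‖ := abs_real_inner_le_norm z ξ
    have h2 : ⟪z, ξ⟫ ^ 2 ≤ ‖z‖ ^ 2 * ‖ξ‖ ^ 2 := by
      rw [← sq_abs, ← mul_pow]
      exact pow_le_pow_left₀ (abs_nonneg _) h1 2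
    have h3 : ‖z‖ ^ 2 ≤ 1 + ‖z‖ ^ 3 := by
      nlinarith [norm_nonneg z, sq_nonneg (‖z‖ - 1), sq_nonneg ‖z‖]
    rw [Real.norm_eq_abs, Real.norm_eq_abs,
      abs_of_nonneg (mul_nonneg (ha0 z) (sq_nonneg _)),
      abs_of_nonneg (mul_nonneg (sq_nonneg _)
        (add_nonneg (ha0 z) (mul_nonneg (by positivity) (ha0 z))))]
    have hξ2 := sq_nonneg ‖ξ‖
    nlinarith [ha0 z, mul_le_mul_of_nonneg_left h2 (ha0 z),
      mul_le_mul_of_nonneg_left h3 (mul_nonneg (ha0 z) hξ2)]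
  -- positivity of Â(y) for y ≠ 0
  have hApos : ∀ y : EuclideanSpace ℝ (Fin d), y ≠ 0 →
      0 < ∫ z, (1 - Real.cos ⟪z, y⟫) * a z := by
    intro y hy
    refine hgen _ (fun z => mul_nonneg (by linarith [Real.cos_le_one ⟪z, y⟫]) (ha0 z))
      (hA_int y) (⋃ k : ℤ, {z | ⟪z, y⟫ = (k : ℝ) * (2 * Real.pi)})
      (measure_iUnion_null fun k => aux_hyperplane_null y hy _) ?_
    intro z hz h0
    have hcz : Real.cos ⟪z, y⟫ = 1 := by
      rcases mul_eq_zero.1 h0 with h | h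
      · linarith
      · exact absurd h hz
    rcases (Real.cos_eq_one_iff _).1 hcz with ⟨k, hk⟩
    exact Set.mem_iUnion.2 ⟨k, hk.symm⟩
  -- positivity of M₃
  have hM3pos : 0 < M3 := by
    rw [hM3def]
    have hd' : (⟨0, hd⟩ : Fin d) = ⟨0, hd⟩ := rfl
    set e : EuclideanSpace ℝ (Fin d) := EuclideanSpace.single ⟨0, hd⟩ (1 : ℝ) with he
    have hene : e ≠ 0 := by
      intro h
      have h1 : e ⟨0, hd⟩ = 1 := by simp [he]
      rw [h] at h1
      simp at h1
    refine hgen _ (fun z => mul_nonneg (by positivity) (ha0 z)) hM3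
      {z | ⟪z, e⟫ = 0} (aux_hyperplane_null e hene 0) ?_
    intro z hz h0
    rcases mul_eq_zero.1 h0 with h | h
    · have : z = 0 := by
        have := pow_eq_zero_iff (n := 3) (by norm_num) |>.1 h
        exact norm_eq_zero.1 this
      simp [this]
    · exact absurd h hz
  -- positivity of M
  have hMpos : 0 < M := by
    obtain ⟨θ, hθ, hMeq⟩ := hM.1
    have hθne : θ ≠ 0 := fun h => by simp [h] at hθ
    rw [← hMeq]
    refine hgen _ (fun z => mul_nonneg (ha0 z) (sq_nonneg _)) (hsq_int θ)
      {z | ⟪z, θ⟫ = 0} (aux_hyperplane_null θ hθne 0) ?_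
    intro z hz h0
    rcases mul_eq_zero.1 h0 with h | h
    · exact absurd h hz
    · exact pow_eq_zero_iff (by norm_num) |>.1 h
  have hr₀pos : 0 < 3 * M / (2 * M3) := by positivity
  have hCrpos : ∀ r : ℝ, 0 < r → 0 < Cr r := by
    intro r hr
    obtain ⟨y₀, hy₀, heq⟩ := (hCr r hr).1
    rw [← heq]
    refine hApos y₀ fun h => ?_
    have hy₀' : r ≤ ‖y₀‖ := hy₀
    rw [h, norm_zero] at hy₀'
    linarith
  have hπd : 0 < Real.pi ^ 2 * d := mul_pos (by positivity) (by exact_mod_cast hd)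
  have hCpos : 0 < C := by
    rw [hCdef]
    exact lt_min (lt_min (by linarith) (div_pos (hCrpos _ hr₀pos) hπd))
      (div_pos (hCrpos _ hπ) hπd)
  refine ⟨hCpos, ?_⟩
  intro ξ hξ n
  have hnormξ : ‖ξ‖ ^ 2 ≤ Real.pi ^ 2 * d := by
    rw [aux_norm_sq_eq]
    calc ∑ i, ξ i ^ 2 ≤ ∑ _i : Fin d, Real.pi ^ 2 := by
          refine Finset.sum_le_sum fun i _ => ?_
          have h := hξ i
          have habs : |ξ i| ≤ Real.pi := abs_le.2 ⟨h.1, h.2.le⟩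
          calc ξ i ^ 2 = |ξ i| ^ 2 := (sq_abs _).symm
            _ ≤ Real.pi ^ 2 := pow_le_pow_left₀ (abs_nonneg _) habs 2
      _ = Real.pi ^ 2 * d := by
          rw [Finset.sum_const, Finset.card_univ, Fintype.card_fin, nsmul_eq_mul]
          ring
  -- tail bound: if ‖y‖ ≥ r and C ≤ Cr r / (π²d) then done
  have htail : ∀ r : ℝ, 0 < r → ∀ y : EuclideanSpace ℝ (Fin d), r ≤ ‖y‖ →
      C ≤ Cr r / (Real.pi ^ 2 * d) →
      C * ‖ξ‖ ^ 2 ≤ ∫ z, (1 - Real.cos ⟪z, y⟫) * a z := by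
    intro r hr y hy hC
    have h1 : Cr r ≤ ∫ z, (1 - Real.cos ⟪z, y⟫) * a z := (hCr r hr).2 ⟨y, hy, rfl⟩
    have h2 : C * ‖ξ‖ ^ 2 ≤ (Cr r / (Real.pi ^ 2 * d)) * (Real.pi ^ 2 * d) := by
      calc C * ‖ξ‖ ^ 2 ≤ (Cr r / (Real.pi ^ 2 * d)) * ‖ξ‖ ^ 2 :=
            mul_le_mul_of_nonneg_right hC (sq_nonneg _)
        _ ≤ (Cr r / (Real.pi ^ 2 * d)) * (Real.pi ^ 2 * d) :=
            mul_le_mul_of_nonneg_left hnormξ (le_of_lt (div_pos (hCrpos r hr) hπd))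
    rw [div_mul_cancel₀ _ hπd.ne'] at h2
    exact h2.trans h1
  by_cases hn : ∀ i, n i = 0
  · have hiv : intVec d n = 0 := by
      ext i
      simp [intVec, hn i]
    rw [hiv, smul_zero, add_zero]
    by_cases hξ0 : ξ = 0
    · rw [hξ0]
      simpa using hInn (0 : EuclideanSpace ℝ (Fin d))
    rcases le_or_gt ‖ξ‖ (3 * M / (2 * M3)) with hle | hlt
    · -- Taylor branch
      have hint1 : Integrable (fun z => a z * ⟪z, ξ⟫ ^ 2 / 2
          - ‖ξ‖ ^ 3 / 6 * (‖z‖ ^ 3 * a z)) :=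
        ((hsq_int ξ).div_const 2).sub (hM3.const_mul _)
      have hpt : ∀ z, a z * ⟪z, ξ⟫ ^ 2 / 2 - ‖ξ‖ ^ 3 / 6 * (‖z‖ ^ 3 * a z)
          ≤ (1 - Real.cos ⟪z, ξ⟫) * a z := by
        intro z
        have h1 := aux_cos_cubic ⟪z, ξ⟫
        have h2 : |⟪z, ξ⟫| ^ 3 ≤ ‖z‖ ^ 3 * ‖ξ‖ ^ 3 := by
          rw [← mul_pow]
          exact pow_le_pow_left₀ (abs_nonneg _) (abs_real_inner_le_norm z ξ) 3
        have h3 : (⟪z, ξ⟫ ^ 2 / 2 - ‖z‖ ^ 3 * ‖ξ‖ ^ 3 / 6) * a z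
            ≤ (1 - Real.cos ⟪z, ξ⟫) * a z :=
          mul_le_mul_of_nonneg_right (by linarith) (ha0 z)
        have h4 : a z * ⟪z, ξ⟫ ^ 2 / 2 - ‖ξ‖ ^ 3 / 6 * (‖z‖ ^ 3 * a z)
            = (⟪z, ξ⟫ ^ 2 / 2 - ‖z‖ ^ 3 * ‖ξ‖ ^ 3 / 6) * a z := by ring
        linarith
      have hmono := integral_mono hint1 (hA_int ξ) hpt
      rw [integral_sub ((hsq_int ξ).div_const 2) (hM3.const_mul _), integral_div,
        integral_const_mul, ← hM3def] at hmono
      -- lower bound ∫ a ⟪z,ξ⟫² ≥ M ‖ξ‖²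
      have hMl : M * ‖ξ‖ ^ 2 ≤ ∫ z, a z * ⟪z, ξ⟫ ^ 2 := by
        set θ : EuclideanSpace ℝ (Fin d) := (‖ξ‖⁻¹ : ℝ) • ξ with hθdef
        have hθ : ‖θ‖ = 1 := norm_smul_inv_norm hξ0
        have hMle : M ≤ ∫ z, a z * ⟪z, θ⟫ ^ 2 := hM.2 ⟨θ, hθ, rfl⟩
        have hrw : ∫ z, a z * ⟪z, ξ⟫ ^ 2 = ‖ξ‖ ^ 2 * ∫ z, a z * ⟪z, θ⟫ ^ 2 := by
          rw [← integral_const_mul]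
          congr 1
          funext z
          have hinner : ⟪z, ξ⟫ = ‖ξ‖ * ⟪z, θ⟫ := by
            rw [hθdef, real_inner_smul_right, ← mul_assoc,
              mul_inv_cancel₀ (norm_ne_zero_iff.2 hξ0), one_mul]
          rw [hinner]
          ring
        rw [hrw]
        calc M * ‖ξ‖ ^ 2 = ‖ξ‖ ^ 2 * M := by ring
          _ ≤ ‖ξ‖ ^ 2 * ∫ z, a z * ⟪z, θ⟫ ^ 2 :=
            mul_le_mul_of_nonneg_left hMle (sq_nonneg _)
      have hcube : ‖ξ‖ ^ 3 * M3 ≤ 3 * M / 2 * ‖ξ‖ ^ 2 := by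
        have h5 : ‖ξ‖ ^ 3 ≤ ‖ξ‖ ^ 2 * (3 * M / (2 * M3)) := by
          have h6 : ‖ξ‖ ^ 3 = ‖ξ‖ ^ 2 * ‖ξ‖ := by ring
          rw [h6]
          exact mul_le_mul_of_nonneg_left hle (sq_nonneg _)
        have h7 := mul_le_mul_of_nonneg_right h5 hM3pos.le
        have h8 : ‖ξ‖ ^ 2 * (3 * M / (2 * M3)) * M3 = 3 * M / 2 * ‖ξ‖ ^ 2 := by
          field_simp
        linarith
      have hCleM : C ≤ M / 4 := (min_le_left _ _).trans (min_le_left _ _)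
      have hstep : C * ‖ξ‖ ^ 2 ≤ (∫ z, a z * ⟪z, ξ⟫ ^ 2) / 2 - ‖ξ‖ ^ 3 / 6 * M3 := by
        have h9 := mul_le_mul_of_nonneg_right hCleM (sq_nonneg ‖ξ‖)
        nlinarith [hMl, hcube]
      exact hstep.trans hmono
    · exact htail _ hr₀pos ξ hlt.le ((min_le_left _ _).trans (min_le_right _ _))
  · push_neg at hn
    obtain ⟨i, hi⟩ := hn
    have happ : (ξ + (2 * Real.pi) • intVec d n) i = ξ i + 2 * Real.pi * (n i : ℝ) := by
      simp [intVec, PiLp.add_apply, PiLp.smul_apply, smul_eq_mul]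
    have hyi : Real.pi ≤ |(ξ + (2 * Real.pi) • intVec d n) i| := by
      rw [happ]
      have h1 : (1 : ℝ) ≤ |(n i : ℝ)| := by
        rw [← Int.cast_abs]
        exact_mod_cast Int.one_le_abs hi
      have h2 : |ξ i| ≤ Real.pi := abs_le.2 ⟨(hξ i).1, (hξ i).2.le⟩
      have h3 : 2 * Real.pi ≤ |2 * Real.pi * (n i : ℝ)| := by
        rw [abs_mul, abs_of_pos (by positivity : (0:ℝ) < 2 * Real.pi)]
        nlinarith
      have h4 : |2 * Real.pi * (n i : ℝ)|
          ≤ |ξ i + 2 * Real.pi * (n i : ℝ)| + |ξ i| := by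
        have h5 := abs_add_le (ξ i + 2 * Real.pi * (n i : ℝ)) (-(ξ i))
        simpa using h5
      linarith
    have hy : Real.pi ≤ ‖ξ + (2 * Real.pi) • intVec d n‖ :=
      hyi.trans (aux_abs_coord_le_norm _ i)
    exact htail Real.pi hπ _ hy (min_le_right _ _)
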